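/- Let a₁,a₂,b,c₁,c₂ ∈ ℝ and on the region {(x₁,x₂,x₃) ∈ ℝ³ : x₃ > 0} define the 1-form ω = ω₁dx₁ + ω₂dx₂ + ω₃dx₃ with ω₁ = (1/x₃²)((a₁/2)(x₁²−x₂²) + a₂x₁x₂ + bx₁ + c₁) − a₁/2, ω₂ = (1/x₃²)((a₂/2)(x₂²−x₁²) + a₁x₁x₂ + bx₂ + c₂) − a₂/2, ω₃ = (a₁x₁ + a₂x₂ + b)/x₃. Then ω ∧ dω = (2(c₁a₂ − c₂a₁)/x₃³) dx₁ ∧ dx₂ ∧ dx₃. -/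

import Mathlib

/-- Components of the dual 1-form `ω` on `{x₃ > 0} ⊂ ℝ³`. -/
noncomputable def ww1 (a₁ a₂ b c₁ x₁ x₂ x₃ : ℝ) : ℝ :=
  (1 / x₃ ^ 2) * (a₁ / 2 * (x₁ ^ 2 - x₂ ^ 2) + a₂ * x₁ * x₂ + b * x₁ + c₁) - a₁ / 2
noncomputable def ww2 (a₁ a₂ b c₂ x₁ x₂ x₃ : ℝ) : ℝ :=
  (1 / x₃ ^ 2) * (a₂ / 2 * (x₂ ^ 2 - x₁ ^ 2) + a₁ * x₁ * x₂ + b * x₂ + c₂) - a₂ / 2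
noncomputable def ww3 (a₁ a₂ b x₁ x₂ x₃ : ℝ) : ℝ := (a₁ * x₁ + a₂ * x₂ + b) / x₃

lemma hasDerivAt_inv2 (K a s : ℝ) (hs : s ≠ 0) :
    HasDerivAt (fun t : ℝ => 1 / t ^ 2 * K - a) (-2 * K / s ^ 3) s := by
  have h1 : HasDerivAt (fun t : ℝ => t ^ 2) (2 * s) s := by
    simpa using hasDerivAt_pow 2 s
  have h2 := ((h1.inv (pow_ne_zero 2 hs)).mul_const K).sub_const a
  have hval : -(2 * s) / (s ^ 2) ^ 2 * K = -2 * K / s ^ 3 := by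
    field_simp
  simpa [one_div, hval] using h2

/-- `ω ∧ dω = (2(c₁a₂ − c₂a₁)/x₃³) dx₁∧dx₂∧dx₃`: the coefficient of `dx₁∧dx₂∧dx₃` in
`ω ∧ dω` is `ω₁(∂₂ω₃−∂₃ω₂) − ω₂(∂₁ω₃−∂₃ω₁) + ω₃(∂₁ω₂−∂₂ω₁)`. -/
theorem stmt8 (a₁ a₂ b c₁ c₂ : ℝ) (x₁ x₂ x₃ : ℝ) (h : 0 < x₃) :
    ww1 a₁ a₂ b c₁ x₁ x₂ x₃ *
        (deriv (fun s => ww3 a₁ a₂ b x₁ s x₃) x₂ -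
          deriv (fun s => ww2 a₁ a₂ b c₂ x₁ x₂ s) x₃) -
      ww2 a₁ a₂ b c₂ x₁ x₂ x₃ *
        (deriv (fun s => ww3 a₁ a₂ b s x₂ x₃) x₁ -
          deriv (fun s => ww1 a₁ a₂ b c₁ x₁ x₂ s) x₃) +
      ww3 a₁ a₂ b x₁ x₂ x₃ *
        (deriv (fun s => ww2 a₁ a₂ b c₂ s x₂ x₃) x₁ -
          deriv (fun s => ww1 a₁ a₂ b c₁ x₁ s x₃) x₂) =
      2 * (c₁ * a₂ - c₂ * a₁) / x₃ ^ 3 := by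
  have hx : x₃ ≠ 0 := ne_of_gt h
  -- ∂₂ ω₃
  have h23 : HasDerivAt (fun s => ww3 a₁ a₂ b x₁ s x₃) (a₂ / x₃) x₂ := by
    simp only [ww3]
    have := ((((hasDerivAt_id x₂).const_mul a₂).const_add (a₁ * x₁)).add_const b).div_const x₃
    simpa using this
  -- ∂₁ ω₃
  have h13 : HasDerivAt (fun s => ww3 a₁ a₂ b s x₂ x₃) (a₁ / x₃) x₁ := by
    simp only [ww3]
    have := ((((hasDerivAt_id x₁).const_mul a₁).add_const (a₂ * x₂)).add_const b).div_const x₃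
    simpa using this
  -- ∂₃ ω₂
  have h32 : HasDerivAt (fun s => ww2 a₁ a₂ b c₂ x₁ x₂ s)
      (-2 * (a₂ / 2 * (x₂ ^ 2 - x₁ ^ 2) + a₁ * x₁ * x₂ + b * x₂ + c₂) / x₃ ^ 3) x₃ := by
    simp only [ww2]
    exact hasDerivAt_inv2 _ _ _ hx
  -- ∂₃ ω₁
  have h31 : HasDerivAt (fun s => ww1 a₁ a₂ b c₁ x₁ x₂ s)
      (-2 * (a₁ / 2 * (x₁ ^ 2 - x₂ ^ 2) + a₂ * x₁ * x₂ + b * x₁ + c₁) / x₃ ^ 3) x₃ := by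
    simp only [ww1]
    exact hasDerivAt_inv2 _ _ _ hx
  -- ∂₁ ω₂
  have h12 : HasDerivAt (fun s => ww2 a₁ a₂ b c₂ s x₂ x₃)
      (1 / x₃ ^ 2 * (a₂ / 2 * (-(2 * x₁)) + a₁ * x₂)) x₁ := by
    simp only [ww2]
    have hsq : HasDerivAt (fun s : ℝ => s ^ 2) (2 * x₁) x₁ := by
      simpa using hasDerivAt_pow 2 x₁
    have hA := (hsq.const_sub (x₂ ^ 2)).const_mul (a₂ / 2)
    have hC : HasDerivAt (fun s : ℝ => a₁ * s * x₂) (a₁ * x₂) x₁ := by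
      simpa [mul_assoc] using ((hasDerivAt_id x₁).const_mul a₁).mul_const x₂
    have := ((((hA.add hC).add_const (b * x₂)).add_const c₂).const_mul (1 / x₃ ^ 2)).sub_const
      (a₂ / 2)
    simpa using this
  -- ∂₂ ω₁
  have h21 : HasDerivAt (fun s => ww1 a₁ a₂ b c₁ x₁ s x₃)
      (1 / x₃ ^ 2 * (a₁ / 2 * (-(2 * x₂)) + a₂ * x₁)) x₂ := by
    simp only [ww1]
    have hsq : HasDerivAt (fun s : ℝ => s ^ 2) (2 * x₂) x₂ := by
      simpa using hasDerivAt_pow 2 x₂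
    have hA := (hsq.const_sub (x₁ ^ 2)).const_mul (a₁ / 2)
    have hC : HasDerivAt (fun s : ℝ => a₂ * x₁ * s) (a₂ * x₁) x₂ := by
      simpa using (hasDerivAt_id x₂).const_mul (a₂ * x₁)
    have := ((((hA.add hC).add_const (b * x₁)).add_const c₁).const_mul (1 / x₃ ^ 2)).sub_const
      (a₁ / 2)
    simpa using this
  rw [h23.deriv, h13.deriv, h32.deriv, h31.deriv, h12.deriv, h21.deriv]
  simp only [ww1, ww2, ww3]
  field_simp
  ring
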